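/- Let μ_σ and μ_ε be positive finite Borel measures on [0,1] satisfying the thermodynamical restriction (T). Then for all 0 ≤ y < x ≤ 1: μ_σ([y,1])·μ_ε([x,1]) ≥ μ_σ([x,1])·μ_ε([y,1]). (Equivalently, the function F(x) = μ_σ([x,1])/μ_ε([x,1]) is non-increasing wherever its denominator is positive.) -/

import Mathlib

open MeasureTheory Complex Set

/-- The thermodynamical restriction (T). -/
def TDrestriction (μσ με : Measure ℝ) : Prop :=
  ∀ E : Set (ℝ × ℝ), MeasurableSet E →
    E ⊆ {p : ℝ × ℝ | p.2 < p.1 ∧ p.1 ∈ Set.Icc (0:ℝ) 1 ∧ p.2 ∈ Set.Icc (0:ℝ) 1} →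
    (μσ.prod με) E ≤ (με.prod μσ) E

theorem stmt_10 (μσ με : Measure ℝ) [IsFiniteMeasure μσ] [IsFiniteMeasure με]
    (hT : TDrestriction μσ με) :
    ∀ x y : ℝ, 0 ≤ y → y < x → x ≤ 1 →
      μσ (Set.Icc x 1) * με (Set.Icc y 1) ≤ μσ (Set.Icc y 1) * με (Set.Icc x 1) := by
  intro x y hy hyx hx1
  have hE : (μσ.prod με) (Icc x 1 ×ˢ Ico y x) ≤ (με.prod μσ) (Icc x 1 ×ˢ Ico y x) := by
    apply hT _ (measurableSet_Icc.prod measurableSet_Ico)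
    rintro ⟨a, b⟩ ⟨ha, hb⟩
    exact ⟨hb.2.trans_le ha.1, ⟨hy.trans (hyx.le.trans ha.1), ha.2⟩,
      ⟨hy.trans hb.1, hb.2.le.trans hx1⟩⟩
  rw [Measure.prod_prod, Measure.prod_prod] at hE
  have hunion : Ico y x ∪ Icc x 1 = Icc y 1 := Ico_union_Icc_eq_Icc hyx.le hx1
  have hdisj : Disjoint (Ico y x) (Icc x 1) := by
    apply Set.disjoint_left.mpr
    intro a ha ha'
    exact absurd ha'.1 (not_le.mpr ha.2)
  have hσ : μσ (Icc y 1) = μσ (Ico y x) + μσ (Icc x 1) := by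
    rw [← hunion, measure_union hdisj measurableSet_Icc]
  have hε : με (Icc y 1) = με (Ico y x) + με (Icc x 1) := by
    rw [← hunion, measure_union hdisj measurableSet_Icc]
  calc μσ (Icc x 1) * με (Icc y 1)
      = μσ (Icc x 1) * με (Ico y x) + μσ (Icc x 1) * με (Icc x 1) := by
        rw [hε, mul_add]
    _ ≤ με (Icc x 1) * μσ (Ico y x) + μσ (Icc x 1) * με (Icc x 1) :=
        add_le_add hE le_rfl
    _ = μσ (Icc y 1) * με (Icc x 1) := by rw [hσ, add_mul]; ring
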